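/- Let V be an n-dimensional real inner product space with n ≥ 4, and let B, B̄ be symmetric bilinear forms on V with matrices (B_ij), (B̄_ij) in an orthonormal basis. Define S_ijkl = B_ik B_jl − B_il B_jk + (1/(n−2)) Σ_m (δ_ik B_jm B_ml + δ_jl B_im B_mk − δ_il B_jm B_mk − δ_jk B_im B_ml), and similarly S̄ for B̄. If S_ijkl = S̄_ijkl for all i,j,k,l, then either B and B̄ can be simultaneously diagonalized by an orthonormal basis, or there exists an orthonormal basis in which B̄ = diag(λ̄₁, λ̄₂, μ̄, …, μ̄) with λ̄₁ ≠ λ̄₂, and B has block form with B restricted to span(e₁,e₂) a symmetric 2×2 block (possibly non-diagonal) and B = μ·Id on span(e₃,…,e_n), where μ = ±μ̄. -/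

import Mathlib

open Matrix BigOperators
open Finset

/-- The Weyl-tensor-like fourth order tensor `S` associated to a symmetric
bilinear form `B` (given by its coefficient matrix in an orthonormal basis):
`S_ijkl = B_ik B_jl − B_il B_jk + (1/(n−2)) Σ_m (δ_ik B_jm B_ml + δ_jl B_im B_mk
  − δ_il B_jm B_mk − δ_jk B_im B_ml)`. -/
noncomputable def mobiusS (n : ℕ) (B : Matrix (Fin n) (Fin n) ℝ) (i j k l : Fin n) : ℝ :=
  B i k * B j l - B i l * B j k +
    (1 / ((n : ℝ) - 2)) * ∑ m : Fin n,
      ((if i = k then (1 : ℝ) else 0) * (B j m * B m l)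
        + (if j = l then (1 : ℝ) else 0) * (B i m * B m k)
        - (if i = l then (1 : ℝ) else 0) * (B j m * B m k)
        - (if j = k then (1 : ℝ) else 0) * (B i m * B m l))

section Equivariance

lemma mobius_closed (n : ℕ) (B : Matrix (Fin n) (Fin n) ℝ) (i j k l : Fin n) :
    mobiusS n B i j k l = B i k * B j l - B i l * B j k +
      (1 / ((n : ℝ) - 2)) *
        ((if i = k then (1 : ℝ) else 0) * (B*B) j l
          + (if j = l then (1 : ℝ) else 0) * (B*B) i k
          - (if i = l then (1 : ℝ) else 0) * (B*B) j k
          - (if j = k then (1 : ℝ) else 0) * (B*B) i l) := by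
  unfold mobiusS
  congr 1
  congr 1
  simp only [Finset.sum_sub_distrib, Finset.sum_add_distrib, ← Finset.mul_sum, Matrix.mul_apply]

variable {n : ℕ} (O B : Matrix (Fin n) (Fin n) ℝ)

lemma sum4_fac1 (f g : Matrix (Fin n) (Fin n) ℝ) (i j k l : Fin n) :
    ∑ a : Fin n, ∑ b : Fin n, ∑ c : Fin n, ∑ d : Fin n,
      O i a * O j b * O k c * O l d * (f a c * g b d)
    = (∑ a : Fin n, ∑ c : Fin n, O i a * O k c * f a c) *
      (∑ b : Fin n, ∑ d : Fin n, O j b * O l d * g b d) := by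
  rw [Finset.sum_mul_sum]
  refine Finset.sum_congr rfl fun a _ => ?_
  refine Finset.sum_congr rfl fun b _ => ?_
  rw [Finset.sum_mul_sum]
  refine Finset.sum_congr rfl fun c _ => ?_
  refine Finset.sum_congr rfl fun d _ => ?_
  ring

lemma sum4_fac2 (f g : Matrix (Fin n) (Fin n) ℝ) (i j k l : Fin n) :
    ∑ a : Fin n, ∑ b : Fin n, ∑ c : Fin n, ∑ d : Fin n,
      O i a * O j b * O k c * O l d * (f a d * g b c)
    = (∑ a : Fin n, ∑ c : Fin n, O i a * O l c * f a c) *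
      (∑ b : Fin n, ∑ d : Fin n, O j b * O k d * g b d) := by
  have h : ∀ a b : Fin n, ∑ c : Fin n, ∑ d : Fin n,
      O i a * O j b * O k c * O l d * (f a d * g b c)
      = ∑ c : Fin n, ∑ d : Fin n, O i a * O j b * O l c * O k d * (f a c * g b d) := by
    intro a b
    rw [Finset.sum_comm]
    refine Finset.sum_congr rfl fun c _ => ?_
    refine Finset.sum_congr rfl fun d _ => ?_
    ring
  simp_rw [h]
  exact sum4_fac1 O f g i j l k

lemma double_OB (f : Matrix (Fin n) (Fin n) ℝ) (i k : Fin n) :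
    ∑ a : Fin n, ∑ c : Fin n, O i a * O k c * f a c = (O * f * Oᵀ) i k := by
  simp only [Matrix.mul_apply, Matrix.transpose_apply, Finset.sum_mul]
  rw [Finset.sum_comm]
  refine Finset.sum_congr rfl fun a _ => ?_
  refine Finset.sum_congr rfl fun c _ => ?_
  ring

lemma double_Odelta (hO : O * Oᵀ = 1) (i k : Fin n) :
    ∑ a : Fin n, ∑ c : Fin n, O i a * O k c * (if a = c then (1:ℝ) else 0)
      = (if i = k then (1:ℝ) else 0) := by
  have : ∀ a : Fin n, ∑ c : Fin n, O i a * O k c * (if a = c then (1:ℝ) else 0)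
      = O i a * O k a := by
    intro a
    rw [Finset.sum_eq_single a]
    · simp
    · intro c _ hca; simp [Ne.symm hca]
    · intro h; exact absurd (Finset.mem_univ a) h
  simp_rw [this]
  have h2 : ∑ a : Fin n, O i a * O k a = (O * Oᵀ) i k := by
    simp [Matrix.mul_apply]
  rw [h2, hO]
  by_cases h : i = k <;> simp [h, Matrix.one_apply]

lemma equivar (hO : O * Oᵀ = 1) (hO' : Oᵀ * O = 1) (i j k l : Fin n) :
    ∑ a : Fin n, ∑ b : Fin n, ∑ c : Fin n, ∑ d : Fin n,
      O i a * O j b * O k c * O l d * mobiusS n B a b c d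
    = mobiusS n (O * B * Oᵀ) i j k l := by
  set e := 1/((n:ℝ)-2) with he
  set Q := B * B with hQdef
  set B' := O * B * Oᵀ with hB'
  set df : Matrix (Fin n) (Fin n) ℝ := Matrix.of (fun a c : Fin n => if a = c then (1:ℝ) else 0) with hdf
  have hdfa : ∀ a c : Fin n, df a c = if a = c then (1:ℝ) else 0 := fun a c => rfl
  have hQ : B' * B' = O * Q * Oᵀ := by
    have h1 : Oᵀ * B' = B * Oᵀ := by
      rw [hB', ← Matrix.mul_assoc, ← Matrix.mul_assoc, hO', one_mul]
    calc B' * B' = (O * B) * (Oᵀ * B') := by rw [hB', Matrix.mul_assoc (O*B) Oᵀ B']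
    _ = (O * B) * (B * Oᵀ) := by rw [h1]
    _ = O * Q * Oᵀ := by rw [hQdef, Matrix.mul_assoc, Matrix.mul_assoc, Matrix.mul_assoc]
  have expand : ∀ a b c d : Fin n, O i a * O j b * O k c * O l d * mobiusS n B a b c d
      = O i a * O j b * O k c * O l d * (B a c * B b d)
      - O i a * O j b * O k c * O l d * (B a d * B b c)
      + e * (O i a * O j b * O k c * O l d * (df a c * Q b d))
      + e * (O i a * O j b * O k c * O l d * (Q a c * df b d))
      - e * (O i a * O j b * O k c * O l d * (df a d * Q b c))
      - e * (O i a * O j b * O k c * O l d * (Q a d * df b c)) := by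
    intro a b c d
    rw [mobius_closed]
    simp only [hdfa, hQdef]
    ring
  simp_rw [expand]
  simp only [Finset.sum_add_distrib, Finset.sum_sub_distrib, ← Finset.mul_sum]
  rw [sum4_fac1 O B B i j k l, sum4_fac2 O B B i j k l,
    sum4_fac1 O df Q i j k l, sum4_fac1 O Q df i j k l,
    sum4_fac2 O df Q i j k l, sum4_fac2 O Q df i j k l]
  have hOB : ∀ x y : Fin n, ∑ a : Fin n, ∑ c : Fin n, O x a * O y c * B a c = B' x y :=
    fun x y => double_OB O B x y
  have hOQ : ∀ x y : Fin n, ∑ a : Fin n, ∑ c : Fin n, O x a * O y c * Q a c = (B' * B') x y := by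
    intro x y; rw [hQ]; exact double_OB O Q x y
  have hOd : ∀ x y : Fin n, ∑ a : Fin n, ∑ c : Fin n, O x a * O y c * df a c
      = if x = y then (1:ℝ) else 0 := by
    intro x y
    simp only [hdfa]
    exact double_Odelta O hO x y
  rw [hOB i k, hOB j l, hOB i l, hOB j k, hOd i k, hOQ j l, hOQ i k, hOd j l,
    hOd i l, hOQ j k, hOQ i l, hOd j k]
  rw [mobius_closed]
  ring


end Equivariance

section Spectral
variable {n : ℕ}

lemma exists_orthog_diag {m : ℕ} (M : Matrix (Fin m) (Fin m) ℝ) (hM : M.IsSymm) :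
    ∃ (Q : Matrix (Fin m) (Fin m) ℝ) (d : Fin m → ℝ),
      Q * Qᵀ = 1 ∧ Qᵀ * Q = 1 ∧ Q * M * Qᵀ = Matrix.diagonal d := by
  have hH : M.IsHermitian := by
    rw [Matrix.IsHermitian, Matrix.conjTranspose_eq_transpose_of_trivial]; exact hM
  set U : Matrix (Fin m) (Fin m) ℝ := (hH.eigenvectorUnitary : Matrix (Fin m) (Fin m) ℝ)
  have hU1 : star U * U = 1 := Unitary.coe_star_mul_self hH.eigenvectorUnitary
  have hU2 : U * star U = 1 := Unitary.coe_mul_star_self hH.eigenvectorUnitary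
  have hstar : star U = Uᵀ := Matrix.conjTranspose_eq_transpose_of_trivial U
  refine ⟨Uᵀ, hH.eigenvalues, ?_, ?_, ?_⟩
  · rw [Matrix.transpose_transpose, ← hstar]; exact hU1
  · rw [Matrix.transpose_transpose, ← hstar]; exact hU2
  · rw [Matrix.transpose_transpose, ← hstar]
    simpa using Matrix.IsHermitian.conjStarAlgAut_star_eigenvectorUnitary hH


end Spectral

section Bases
variable {n : ℕ}


lemma base3 (b : OrthonormalBasis (Fin n) ℝ (EuclideanSpace ℝ (Fin n))) (i j : Fin n) :
    ∑ u : Fin n, b i u * b j u = if i = j then (1:ℝ) else 0 := by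
  have h := orthonormal_iff_ite.mp b.orthonormal i j
  rw [PiLp.inner_apply] at h
  simpa [mul_comm] using h

lemma base1 (b : OrthonormalBasis (Fin n) ℝ (EuclideanSpace ℝ (Fin n))) :
    (Matrix.of fun i u => b i u) * (Matrix.of fun i u => b i u)ᵀ = 1 := by
  ext i j
  simp only [Matrix.mul_apply, Matrix.transpose_apply, Matrix.of_apply]
  rw [base3 b i j, Matrix.one_apply]

lemma base2 (b : OrthonormalBasis (Fin n) ℝ (EuclideanSpace ℝ (Fin n)))
    (M : Matrix (Fin n) (Fin n) ℝ) (i j : Fin n) :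
    ((Matrix.of fun i u => b i u) * M * (Matrix.of fun i u => b i u)ᵀ) i j
      = ∑ u : Fin n, ∑ v : Fin n, b i u * M u v * b j v := by
  simp only [Matrix.mul_apply, Matrix.transpose_apply, Matrix.of_apply, Finset.sum_mul]
  rw [Finset.sum_comm]

lemma coord_of_single (b : OrthonormalBasis (Fin n) ℝ (EuclideanSpace ℝ (Fin n)))
    (s z0 : Fin n) (hb0 : b z0 = EuclideanSpace.single s (1:ℝ)) (i : Fin n) :
    b i s = if i = z0 then (1:ℝ) else 0 := by
  have h := base3 b i z0
  rw [hb0] at h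
  simp only [EuclideanSpace.single_apply] at h
  rw [Finset.sum_eq_single s (fun u _ hu => by simp [hu]) (by simp)] at h
  simpa using h

lemma diag_conj (b : OrthonormalBasis (Fin n) ℝ (EuclideanSpace ℝ (Fin n)))
    (lam : Fin n → ℝ) (i j : Fin n) :
    ((Matrix.of fun i u => b i u) * Matrix.diagonal lam * (Matrix.of fun i u => b i u)ᵀ) i j
      = ∑ u : Fin n, b i u * lam u * b j u := by
  rw [base2]
  refine Finset.sum_congr rfl fun u _ => ?_
  rw [Finset.sum_eq_single u (fun v _ hv => by simp [Matrix.diagonal_apply_ne' lam hv])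
    (by simp)]
  simp [Matrix.diagonal_apply_eq]

/-- core computation for the second-disjunct conclusion -/
lemma assembleII_core (hn : 4 ≤ n) (B : Matrix (Fin n) (Fin n) ℝ) (lam : Fin n → ℝ)
    (μ μb ρ : ℝ) (y : Fin n → ℝ) (s : Fin n)
    (hlam : ∀ i, i ≠ s → lam i = μb) (hsne : lam s ≠ μb) (hpm : μ = μb ∨ μ = -μb)
    (hBform : ∀ u v, B u v = (if u = v then μ else 0) + ρ * y u * y v)
    (b : OrthonormalBasis (Fin n) ℝ (EuclideanSpace ℝ (Fin n)))
    (hb0 : b (⟨0, by omega⟩ : Fin n) = EuclideanSpace.single s (1:ℝ))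
    (hyi : ∀ i : Fin n, i ≠ (⟨0, by omega⟩ : Fin n) → i ≠ (⟨1, by omega⟩ : Fin n) →
      ∑ u : Fin n, b i u * y u = 0) :
    (∃ P : Matrix (Fin n) (Fin n) ℝ, Pᵀ * P = 1 ∧
      ∃ l1 l2 μ' μb' : ℝ, l1 ≠ l2 ∧ (μ' = μb' ∨ μ' = -μb') ∧
      (∀ i j : Fin n, (P * Matrix.diagonal lam * Pᵀ) i j =
        if i = j then (if (i : ℕ) = 0 then l1 else if (i : ℕ) = 1 then l2 else μb') else 0) ∧
      (∀ i j : Fin n, 2 ≤ (i : ℕ) ∨ 2 ≤ (j : ℕ) →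
        (P * B * Pᵀ) i j = if i = j then μ' else 0)) := by
  set z0 : Fin n := ⟨0, by omega⟩ with hz0
  set z1 : Fin n := ⟨1, by omega⟩ with hz1
  set P : Matrix (Fin n) (Fin n) ℝ := Matrix.of fun i u => b i u with hP
  have hPP : P * Pᵀ = 1 := base1 b
  have hPtP : Pᵀ * P = 1 := mul_eq_one_comm.mp hPP
  have hbis : ∀ i, b i s = if i = z0 then (1:ℝ) else 0 := coord_of_single b s z0 hb0
  refine ⟨P, hPtP, lam s, μb, μ, μb, hsne, hpm, ?_, ?_⟩
  · intro i j
    rw [diag_conj]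
    have hsum : ∀ u : Fin n, b i u * lam u * b j u
        = μb * (b i u * b j u)
          + (lam s - μb) * ((if u = s then (1:ℝ) else 0) * (b i u * b j u)) := by
      intro u
      by_cases hu : u = s
      · subst hu; simp; ring
      · rw [hlam u hu]; simp [hu]; ring
    rw [Finset.sum_congr rfl fun u _ => hsum u, Finset.sum_add_distrib, ← Finset.mul_sum,
      ← Finset.mul_sum, base3,
      Finset.sum_eq_single s (fun u _ hu => by simp [hu]) (by simp)]
    simp only [if_pos rfl, hbis i, hbis j]
    have hiz : ((i : ℕ) = 0) ↔ i = z0 := by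
      rw [Fin.ext_iff]
    have hjz : ((j : ℕ) = 0) ↔ j = z0 := by
      rw [Fin.ext_iff]
    by_cases hij : i = j
    · subst hij
      by_cases hi0 : i = z0
      · simp only [hi0, if_pos rfl]
        have : ((i:ℕ) = 0) := hiz.mpr hi0
        simp [hi0, this, show ((z0 : Fin n) : ℕ) = 0 from rfl]
      · have : ¬ ((i:ℕ) = 0) := fun h => hi0 (hiz.mp h)
        simp only [if_pos rfl, if_neg hi0, if_neg this]
        by_cases hi1 : (i:ℕ) = 1 <;> simp [hi1]
    · have h2 : ¬ (i = z0 ∧ j = z0) := fun ⟨h1', h2'⟩ => hij (h1'.trans h2'.symm)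
      by_cases hi0 : i = z0
      · have hj0 : ¬ j = z0 := fun h => h2 ⟨hi0, h⟩
        have hzj : ¬ (z0 = j) := fun h => hj0 h.symm
        simp [hij, hi0, hj0, hzj]
      · simp [hij, hi0]
  · intro i j hij2
    rw [base2]
    have hymul : (∑ u : Fin n, b i u * y u) * (∑ v : Fin n, b j v * y v) = 0 := by
      rcases hij2 with h2 | h2
      · have hi0 : i ≠ z0 := by intro h; rw [h] at h2; simp [hz0] at h2
        have hi1 : i ≠ z1 := by intro h; rw [h] at h2; simp [hz1] at h2
        rw [hyi i hi0 hi1, zero_mul]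
      · have hj0 : j ≠ z0 := by intro h; rw [h] at h2; simp [hz0] at h2
        have hj1 : j ≠ z1 := by intro h; rw [h] at h2; simp [hz1] at h2
        rw [hyi j hj0 hj1, mul_zero]
    have e1 : ∀ u v : Fin n, b i u * B u v * b j v
        = μ * ((if u = v then (1:ℝ) else 0) * (b i u * b j v))
          + ρ * ((b i u * y u) * (b j v * y v)) := by
      intro u v; rw [hBform u v]; by_cases huv : u = v
      · subst huv; simp; ring
      · simp [huv]; ring
    calc ∑ u : Fin n, ∑ v : Fin n, b i u * B u v * b j v
        = ∑ u : Fin n, ∑ v : Fin n, (μ * ((if u = v then (1:ℝ) else 0) * (b i u * b j v))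
            + ρ * ((b i u * y u) * (b j v * y v))) :=
          Finset.sum_congr rfl fun u _ => Finset.sum_congr rfl fun v _ => e1 u v
      _ = μ * (∑ u : Fin n, ∑ v : Fin n, (if u = v then (1:ℝ) else 0) * (b i u * b j v))
            + ρ * (∑ u : Fin n, ∑ v : Fin n, (b i u * y u) * (b j v * y v)) := by
          simp only [Finset.sum_add_distrib, ← Finset.mul_sum]
      _ = μ * (if i = j then (1:ℝ) else 0)
            + ρ * ((∑ u : Fin n, b i u * y u) * (∑ v : Fin n, b j v * y v)) := by
          congr 2
          · rw [← base3 b i j]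
            refine Finset.sum_congr rfl fun u _ => ?_
            rw [Finset.sum_eq_single u (fun v _ hv => by simp [Ne.symm hv]) (by simp)]
            simp
          · rw [Finset.sum_mul_sum]
      _ = if i = j then μ else 0 := by
          rw [hymul, mul_zero, add_zero]
          by_cases hij : i = j <;> simp [hij]






lemma inner_single_left' (s : Fin n) (x : EuclideanSpace ℝ (Fin n)) :
    (inner ℝ (EuclideanSpace.single s (1:ℝ)) x : ℝ) = x s := by
  rw [PiLp.inner_apply]
  rw [Finset.sum_eq_single s (fun u _ hu => by simp [EuclideanSpace.single_apply, hu]) (by simp)]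
  simp [EuclideanSpace.single_apply]


lemma exists_basis_two (hn : 4 ≤ n) (s : Fin n) (y : Fin n → ℝ)
    (ht : ∃ t : Fin n, t ≠ s ∧ y t ≠ 0) :
    ∃ b : OrthonormalBasis (Fin n) ℝ (EuclideanSpace ℝ (Fin n)),
      b (⟨0, by omega⟩ : Fin n) = EuclideanSpace.single s (1:ℝ) ∧
      (∀ i : Fin n, i ≠ (⟨0, by omega⟩ : Fin n) → i ≠ (⟨1, by omega⟩ : Fin n) →
        ∑ u : Fin n, b i u * y u = 0) := by
  set z0 : Fin n := ⟨0, by omega⟩ with hz0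
  set z1 : Fin n := ⟨1, by omega⟩ with hz1
  have hz01 : z0 ≠ z1 := by simp [hz0, hz1, Fin.ext_iff]
  set Y' : EuclideanSpace ℝ (Fin n) :=
    (WithLp.equiv 2 (Fin n → ℝ)).symm (fun u => if u = s then 0 else y u) with hY'
  have hY'app : ∀ u, Y' u = if u = s then 0 else y u := fun u => rfl
  have hY'ne : Y' ≠ 0 := by
    obtain ⟨t, hts, hyt⟩ := ht
    intro h
    have : Y' t = 0 := by rw [h]; rfl
    rw [hY'app, if_neg hts] at this
    exact hyt this
  have hnrm : ‖Y'‖ ≠ 0 := norm_ne_zero_iff.mpr hY'ne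
  set f2 : EuclideanSpace ℝ (Fin n) := ‖Y'‖⁻¹ • Y' with hf2
  set v : Fin n → EuclideanSpace ℝ (Fin n) :=
    fun i => if i = z0 then EuclideanSpace.single s (1:ℝ) else f2 with hv
  have hinner_sf : (inner ℝ (EuclideanSpace.single s (1:ℝ)) f2 : ℝ) = 0 := by
    rw [hf2, real_inner_smul_right, inner_single_left', hY'app, if_pos rfl, mul_zero]
  have hinner_ff : (inner ℝ f2 f2 : ℝ) = 1 := by
    rw [hf2, real_inner_smul_right, real_inner_smul_left, real_inner_self_eq_norm_sq]
    field_simp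
  have hvz0 : v z0 = EuclideanSpace.single s 1 := by rw [hv]; simp
  have hvz1 : v z1 = f2 := by rw [hv]; simp [hz01.symm]
  have hON : Orthonormal ℝ (({z0, z1} : Set (Fin n)).restrict v) := by
    rw [orthonormal_iff_ite]
    rintro ⟨i, hi⟩ ⟨j, hj⟩
    simp only [Set.mem_insert_iff, Set.mem_singleton_iff] at hi hj
    have hres : ∀ (x : Fin n) (hx : x ∈ ({z0, z1} : Set (Fin n))),
        ({z0, z1} : Set (Fin n)).restrict v ⟨x, hx⟩ = v x := fun _ _ => rfl
    rw [hres, hres]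
    simp only [Subtype.mk_eq_mk]
    rcases hi with hi | hi <;> rcases hj with hj | hj <;> subst hi <;> subst hj
    · rw [hvz0, if_pos rfl, inner_single_left']
      simp [EuclideanSpace.single_apply]
    · rw [hvz0, hvz1, if_neg hz01, hinner_sf]
    · rw [hvz1, hvz0, if_neg hz01.symm, real_inner_comm, hinner_sf]
    · rw [hvz1, if_pos rfl, hinner_ff]
  have card_eq : Module.finrank ℝ (EuclideanSpace ℝ (Fin n)) = Fintype.card (Fin n) := by
    simp [finrank_euclideanSpace]
  obtain ⟨b, hb⟩ := hON.exists_orthonormalBasis_extension_of_card_eq card_eq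
  have hb0 : b z0 = EuclideanSpace.single s 1 := (hb z0 (by simp)).trans hvz0
  have hb1 : b z1 = f2 := (hb z1 (by simp)).trans hvz1
  refine ⟨b, hb0, ?_⟩
  intro i hi0 hi1
  have hbis : b i s = 0 := by
    have h := coord_of_single b s z0 hb0 i
    rwa [if_neg hi0] at h
  have hyd : ∀ u, y u = (if u = s then y s else 0) + Y' u := by
    intro u
    rw [hY'app]
    by_cases h : u = s <;> simp [h]
  calc ∑ u : Fin n, b i u * y u
      = ∑ u : Fin n, (b i u * (if u = s then y s else 0) + b i u * Y' u) := by
        refine Finset.sum_congr rfl fun u _ => ?_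
        rw [hyd u]; ring
    _ = b i s * y s + ∑ u : Fin n, b i u * Y' u := by
        rw [Finset.sum_add_distrib]
        congr 1
        rw [Finset.sum_eq_single s (fun u _ hu => by simp [hu]) (by simp)]
        simp
    _ = 0 := by
        rw [hbis, zero_mul, zero_add]
        have : ∀ u, Y' u = ‖Y'‖ * b z1 u := by
          intro u
          rw [hb1, hf2]
          simp only [PiLp.smul_apply, smul_eq_mul]
          field_simp
        rw [Finset.sum_congr rfl fun u _ => by rw [this u]]
        have h2 : ∑ u : Fin n, b i u * (‖Y'‖ * b z1 u) = ‖Y'‖ * ∑ u : Fin n, b i u * b z1 u := by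
          rw [Finset.mul_sum]
          exact Finset.sum_congr rfl fun u _ => by ring
        rw [h2, base3, if_neg hi1, mul_zero]

lemma exists_basis_one (hn : 4 ≤ n) (s : Fin n) (y : Fin n → ℝ)
    (hy : ∀ u : Fin n, u ≠ s → y u = 0) :
    ∃ b : OrthonormalBasis (Fin n) ℝ (EuclideanSpace ℝ (Fin n)),
      b (⟨0, by omega⟩ : Fin n) = EuclideanSpace.single s (1:ℝ) ∧
      (∀ i : Fin n, i ≠ (⟨0, by omega⟩ : Fin n) → i ≠ (⟨1, by omega⟩ : Fin n) →
        ∑ u : Fin n, b i u * y u = 0) := by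
  set z0 : Fin n := ⟨0, by omega⟩ with hz0
  set v : Fin n → EuclideanSpace ℝ (Fin n) := fun _ => EuclideanSpace.single s (1:ℝ) with hv
  have hON : Orthonormal ℝ (({z0} : Set (Fin n)).restrict v) := by
    rw [orthonormal_iff_ite]
    rintro ⟨i, hi⟩ ⟨j, hj⟩
    simp only [Set.mem_singleton_iff] at hi hj
    have hres : ∀ (x : Fin n) (hx : x ∈ ({z0} : Set (Fin n))),
        ({z0} : Set (Fin n)).restrict v ⟨x, hx⟩ = v x := fun _ _ => rfl
    rw [hres, hres]
    simp only [Subtype.mk_eq_mk]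
    subst hi; subst hj
    rw [if_pos rfl, hv]
    rw [inner_single_left']
    simp [EuclideanSpace.single_apply]
  have card_eq : Module.finrank ℝ (EuclideanSpace ℝ (Fin n)) = Fintype.card (Fin n) := by
    simp [finrank_euclideanSpace]
  obtain ⟨b, hb⟩ := hON.exists_orthonormalBasis_extension_of_card_eq card_eq
  have hb0 : b z0 = EuclideanSpace.single s 1 := hb z0 rfl
  refine ⟨b, hb0, ?_⟩
  intro i hi0 _
  have hbis : b i s = 0 := by
    have h := coord_of_single b s z0 hb0 i
    rwa [if_neg hi0] at h
  have : ∀ u : Fin n, y u = (if u = s then y s else 0) := by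
    intro u; by_cases h : u = s
    · subst h; simp
    · simp [h, hy u h]
  rw [Finset.sum_congr rfl fun u _ => by rw [this u]]
  rw [Finset.sum_eq_single s (fun u _ hu => by simp [hu]) (by simp)]
  simp [hbis]



lemma sum_bilinear (b : OrthonormalBasis (Fin n) ℝ (EuclideanSpace ℝ (Fin n))) (i j : Fin n)
    (f g : Fin n → ℝ) :
    ∑ u : Fin n, ∑ v : Fin n, b i u * (f u * g v) * b j v
      = (∑ u : Fin n, b i u * f u) * (∑ v : Fin n, b j v * g v) := by
  rw [Finset.sum_mul_sum]
  refine Finset.sum_congr rfl fun u _ => ?_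
  refine Finset.sum_congr rfl fun v _ => ?_
  ring

lemma sum_chi (b : OrthonormalBasis (Fin n) ℝ (EuclideanSpace ℝ (Fin n))) (i p : Fin n) :
    ∑ u : Fin n, b i u * (if u = p then (1:ℝ) else 0) = b i p := by
  rw [Finset.sum_eq_single p (fun u _ hu => by simp [hu]) (by simp)]
  simp



lemma sum_chi2 (b : OrthonormalBasis (Fin n) ℝ (EuclideanSpace ℝ (Fin n))) (i j p : Fin n) :
    ∑ u : Fin n, (if u = p then (1:ℝ) else 0) * (b i u * b j u) = b i p * b j p := by
  rw [Finset.sum_eq_single p (fun u _ hu => by simp [hu]) (by simp)]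
  simp

lemma exists_basis_pq (hn : 4 ≤ n) (p q : Fin n) (hpq : p ≠ q) :
    ∃ b : OrthonormalBasis (Fin n) ℝ (EuclideanSpace ℝ (Fin n)),
      b (⟨0, by omega⟩ : Fin n) = EuclideanSpace.single p (1:ℝ) ∧
      b (⟨1, by omega⟩ : Fin n) = EuclideanSpace.single q (1:ℝ) := by
  set z0 : Fin n := ⟨0, by omega⟩ with hz0
  set z1 : Fin n := ⟨1, by omega⟩ with hz1
  have hz01 : z0 ≠ z1 := by simp [hz0, hz1, Fin.ext_iff]
  set v : Fin n → EuclideanSpace ℝ (Fin n) :=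
    fun i => if i = z0 then EuclideanSpace.single p (1:ℝ) else EuclideanSpace.single q (1:ℝ)
    with hv
  have hvz0 : v z0 = EuclideanSpace.single p 1 := by rw [hv]; simp
  have hvz1 : v z1 = EuclideanSpace.single q 1 := by rw [hv]; simp [hz01.symm]
  have hss : ∀ a b : Fin n,
      (inner ℝ (EuclideanSpace.single a (1:ℝ)) (EuclideanSpace.single b (1:ℝ)) : ℝ)
        = if a = b then 1 else 0 := by
    intro a b
    rw [inner_single_left']
    simp [EuclideanSpace.single_apply, eq_comm]
  have hON : Orthonormal ℝ (({z0, z1} : Set (Fin n)).restrict v) := by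
    rw [orthonormal_iff_ite]
    rintro ⟨i, hi⟩ ⟨j, hj⟩
    simp only [Set.mem_insert_iff, Set.mem_singleton_iff] at hi hj
    have hres : ∀ (x : Fin n) (hx : x ∈ ({z0, z1} : Set (Fin n))),
        ({z0, z1} : Set (Fin n)).restrict v ⟨x, hx⟩ = v x := fun _ _ => rfl
    rw [hres, hres]
    simp only [Subtype.mk_eq_mk]
    rcases hi with hi | hi <;> rcases hj with hj | hj <;> subst hi <;> subst hj
    · rw [hvz0, if_pos rfl, hss]; simp
    · rw [hvz0, hvz1, if_neg hz01, hss]; simp [hpq]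
    · rw [hvz1, hvz0, if_neg hz01.symm, hss]; simp [Ne.symm hpq]
    · rw [hvz1, if_pos rfl, hss]; simp
  have card_eq : Module.finrank ℝ (EuclideanSpace ℝ (Fin n)) = Fintype.card (Fin n) := by
    simp [finrank_euclideanSpace]
  obtain ⟨b, hb⟩ := hON.exists_orthonormalBasis_extension_of_card_eq card_eq
  exact ⟨b, (hb z0 (by simp)).trans hvz0, (hb z1 (by simp)).trans hvz1⟩

lemma assembleI (hn : 4 ≤ n) (B : Matrix (Fin n) (Fin n) ℝ) (lam : Fin n → ℝ)
    (p q : Fin n) (μ μb : ℝ) (hpq : p ≠ q)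
    (hBs : ∀ u v, B u v = B v u)
    (hrowp : ∀ r, r ≠ p → r ≠ q → B p r = 0)
    (hrowq : ∀ r, r ≠ p → r ≠ q → B q r = 0)
    (hoff : ∀ r s, r ≠ p → r ≠ q → s ≠ p → s ≠ q → r ≠ s → B r s = 0)
    (hdiag : ∀ r, r ≠ p → r ≠ q → B r r = μ)
    (hlam : ∀ r, r ≠ p → r ≠ q → lam r = μb)
    (hlpq : lam p ≠ lam q)
    (hpm : μ = μb ∨ μ = -μb) :
    (∃ P : Matrix (Fin n) (Fin n) ℝ, Pᵀ * P = 1 ∧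
      ∃ l1 l2 μ' μb' : ℝ, l1 ≠ l2 ∧ (μ' = μb' ∨ μ' = -μb') ∧
      (∀ i j : Fin n, (P * Matrix.diagonal lam * Pᵀ) i j =
        if i = j then (if (i : ℕ) = 0 then l1 else if (i : ℕ) = 1 then l2 else μb') else 0) ∧
      (∀ i j : Fin n, 2 ≤ (i : ℕ) ∨ 2 ≤ (j : ℕ) →
        (P * B * Pᵀ) i j = if i = j then μ' else 0)) := by
  set z0 : Fin n := ⟨0, by omega⟩ with hz0
  set z1 : Fin n := ⟨1, by omega⟩ with hz1
  obtain ⟨b, hb0, hb1⟩ := exists_basis_pq hn p q hpq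
  set P : Matrix (Fin n) (Fin n) ℝ := Matrix.of fun i u => b i u with hP
  have hPP : P * Pᵀ = 1 := base1 b
  have hPtP : Pᵀ * P = 1 := mul_eq_one_comm.mp hPP
  have hbp : ∀ i, b i p = if i = z0 then (1:ℝ) else 0 := coord_of_single b p z0 hb0
  have hbq : ∀ i, b i q = if i = z1 then (1:ℝ) else 0 := coord_of_single b q z1 hb1
  have hiz0 : ∀ i : Fin n, ((i : ℕ) = 0) ↔ i = z0 := fun i => by rw [Fin.ext_iff]
  have hiz1 : ∀ i : Fin n, ((i : ℕ) = 1) ↔ i = z1 := fun i => by rw [Fin.ext_iff]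
  refine ⟨P, hPtP, lam p, lam q, μ, μb, hlpq, hpm, ?_, ?_⟩
  · intro i j
    rw [diag_conj]
    have hlamform : ∀ u : Fin n, lam u
        = μb + (lam p - μb) * (if u = p then (1:ℝ) else 0)
             + (lam q - μb) * (if u = q then (1:ℝ) else 0) := by
      intro u
      by_cases hup : u = p
      · subst hup; simp [hpq]
      · by_cases huq : u = q
        · subst huq; simp [Ne.symm hpq]
        · rw [hlam u hup huq]; simp [hup, huq]
    have hterm : ∀ u : Fin n, b i u * lam u * b j u
        = μb * (b i u * b j u)
          + (lam p - μb) * ((if u = p then (1:ℝ) else 0) * (b i u * b j u))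
          + (lam q - μb) * ((if u = q then (1:ℝ) else 0) * (b i u * b j u)) := by
      intro u; rw [hlamform u]; ring
    rw [Finset.sum_congr rfl fun u _ => hterm u]
    simp only [Finset.sum_add_distrib, ← Finset.mul_sum]
    rw [base3, sum_chi2, sum_chi2, hbp i, hbp j, hbq i, hbq j]
    have hz01 : z0 ≠ z1 := by simp [hz0, hz1, Fin.ext_iff]
    by_cases hij : i = j
    · subst hij
      rw [if_pos rfl, if_pos rfl]
      by_cases hi0 : i = z0
      · rw [if_pos hi0, if_neg (show i ≠ z1 by rw [hi0]; exact hz01),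
          if_pos ((hiz0 i).mpr hi0)]
        ring
      · rw [if_neg hi0, if_neg (fun h => hi0 ((hiz0 i).mp h))]
        by_cases hi1 : i = z1
        · rw [if_pos hi1, if_pos ((hiz1 i).mpr hi1)]
          ring
        · rw [if_neg hi1, if_neg (fun h => hi1 ((hiz1 i).mp h))]
          ring
    · rw [if_neg hij, if_neg hij]
      have hpz : (if i = z0 then (1:ℝ) else 0) * (if j = z0 then (1:ℝ) else 0) = 0 := by
        by_cases h1 : i = z0
        · have : j ≠ z0 := fun h => hij (h1.trans h.symm)
          simp [this]
        · simp [h1]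
      have hqz : (if i = z1 then (1:ℝ) else 0) * (if j = z1 then (1:ℝ) else 0) = 0 := by
        by_cases h1 : i = z1
        · have : j ≠ z1 := fun h => hij (h1.trans h.symm)
          simp [this]
        · simp [h1]
      rw [hpz, hqz]
      ring
  · intro i j hij2
    rw [base2]
    have hBform : ∀ u v : Fin n, B u v
        = μ * (if u = v then (1:ℝ) else 0)
          + (B p p - μ) * ((if u = p then (1:ℝ) else 0) * (if v = p then (1:ℝ) else 0))
          + B p q * ((if u = p then (1:ℝ) else 0) * (if v = q then (1:ℝ) else 0))
          + B p q * ((if u = q then (1:ℝ) else 0) * (if v = p then (1:ℝ) else 0))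
          + (B q q - μ) * ((if u = q then (1:ℝ) else 0) * (if v = q then (1:ℝ) else 0)) := by
      intro u v
      rcases eq_or_ne u p with hup | hup
      · rcases eq_or_ne v p with hvp | hvp
        · rw [hup, hvp]
          simp [hpq]
        · rcases eq_or_ne v q with hvq | hvq
          · rw [hup, hvq]
            simp [hpq, Ne.symm hpq]
          · rw [hup]
            simp [hpq, Ne.symm hpq, hvp, hvq, Ne.symm hvp]
            exact hrowp v hvp hvq
      · rcases eq_or_ne u q with huq | huq
        · rcases eq_or_ne v p with hvp | hvp
          · rw [huq, hvp]
            simp [hpq, Ne.symm hpq]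
            exact hBs q p
          · rcases eq_or_ne v q with hvq | hvq
            · rw [huq, hvq]
              simp [hpq, Ne.symm hpq]
            · rw [huq]
              simp [hpq, Ne.symm hpq, hvp, hvq, Ne.symm hvq]
              exact hrowq v hvp hvq
        · rcases eq_or_ne v p with hvp | hvp
          · rw [hvp]
            simp [hup, huq]
            rw [hBs u p]
            exact hrowp u hup huq
          · rcases eq_or_ne v q with hvq | hvq
            · rw [hvq]
              simp [hup, huq]
              rw [hBs u q]
              exact hrowq u hup huq
            · rcases eq_or_ne u v with huv | huv
              · rw [← huv]
                simp [hup, huq]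
                exact hdiag u hup huq
              · simp [hup, huq, hvp, hvq, huv]
                exact hoff u v hup huq hvp hvq huv
    have hterm : ∀ u v : Fin n, b i u * B u v * b j v
        = μ * ((if u = v then (1:ℝ) else 0) * (b i u * b j v))
          + (B p p - μ) * (b i u * ((if u = p then (1:ℝ) else 0) * (if v = p then (1:ℝ) else 0)) * b j v)
          + B p q * (b i u * ((if u = p then (1:ℝ) else 0) * (if v = q then (1:ℝ) else 0)) * b j v)
          + B p q * (b i u * ((if u = q then (1:ℝ) else 0) * (if v = p then (1:ℝ) else 0)) * b j v)
          + (B q q - μ) * (b i u * ((if u = q then (1:ℝ) else 0) * (if v = q then (1:ℝ) else 0)) * b j v) := by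
      intro u v; rw [hBform u v]; ring
    rw [Finset.sum_congr rfl fun u _ => Finset.sum_congr rfl fun v _ => hterm u v]
    simp only [Finset.sum_add_distrib, ← Finset.mul_sum]
    rw [sum_bilinear b i j, sum_bilinear b i j, sum_bilinear b i j, sum_bilinear b i j]
    have hdel : ∑ u : Fin n, ∑ v : Fin n, (if u = v then (1:ℝ) else 0) * (b i u * b j v)
        = if i = j then (1:ℝ) else 0 := by
      rw [← base3 b i j]
      refine Finset.sum_congr rfl fun u _ => ?_
      rw [Finset.sum_eq_single u (fun v _ hv => by simp [Ne.symm hv]) (by simp)]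
      simp
    rw [hdel, sum_chi, sum_chi, sum_chi, sum_chi, hbp i, hbp j, hbq i, hbq j]
    have hizero : ∀ k : Fin n, 2 ≤ (k:ℕ) → (k ≠ z0 ∧ k ≠ z1) := by
      intro k hk
      constructor
      · intro h; rw [h] at hk; simp [hz0] at hk
      · intro h; rw [h] at hk; simp [hz1] at hk
    rcases hij2 with h2 | h2
    · obtain ⟨hi0, hi1⟩ := hizero i h2
      rw [if_neg hi0, if_neg hi1]
      simp only [zero_mul, mul_zero, add_zero]
      by_cases hij : i = j <;> simp [hij]
    · obtain ⟨hj0, hj1⟩ := hizero j h2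
      rw [if_neg hj0, if_neg hj1]
      simp only [zero_mul, mul_zero, add_zero]
      by_cases hij : i = j <;> simp [hij]


end Bases

section Rot
variable {n : ℕ}


lemma chi_sum (a : Fin n) (g : Fin n → ℝ) :
    ∑ v : Fin n, (if v = a then (1:ℝ) else 0) * g v = g a := by
  rw [Finset.sum_eq_single a (fun v _ hv => by simp [hv]) (by simp)]
  simp

lemma conj_expand (P M : Matrix (Fin n) (Fin n) ℝ) (x y : Fin n) :
    (P * M * Pᵀ) x y = ∑ u : Fin n, ∑ v : Fin n, P x u * M u v * P y v := by
  simp only [Matrix.mul_apply, Matrix.transpose_apply, Finset.sum_mul]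
  rw [Finset.sum_comm]

lemma quad_chi (M : Matrix (Fin n) (Fin n) ℝ) (a1 a2 b1 b2 : ℝ) (a b c d : Fin n) :
    ∑ u : Fin n, ∑ v : Fin n,
      (a1 * (if u = a then (1:ℝ) else 0) + a2 * (if u = b then (1:ℝ) else 0)) * M u v *
        (b1 * (if v = c then (1:ℝ) else 0) + b2 * (if v = d then (1:ℝ) else 0))
    = a1*b1*M a c + a2*b1*M b c + a1*b2*M a d + a2*b2*M b d := by
  have inner : ∀ u : Fin n, ∑ v : Fin n,
      (a1 * (if u = a then (1:ℝ) else 0) + a2 * (if u = b then (1:ℝ) else 0)) * M u v *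
        (b1 * (if v = c then (1:ℝ) else 0) + b2 * (if v = d then (1:ℝ) else 0))
      = b1 * ((a1 * (if u = a then (1:ℝ) else 0) + a2 * (if u = b then (1:ℝ) else 0)) * M u c)
        + b2 * ((a1 * (if u = a then (1:ℝ) else 0) + a2 * (if u = b then (1:ℝ) else 0)) * M u d) := by
    intro u
    have h : ∀ v : Fin n,
        (a1 * (if u = a then (1:ℝ) else 0) + a2 * (if u = b then (1:ℝ) else 0)) * M u v *
          (b1 * (if v = c then (1:ℝ) else 0) + b2 * (if v = d then (1:ℝ) else 0))
        = b1 * ((if v = c then (1:ℝ) else 0) *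
            ((a1 * (if u = a then (1:ℝ) else 0) + a2 * (if u = b then (1:ℝ) else 0)) * M u v))
          + b2 * ((if v = d then (1:ℝ) else 0) *
            ((a1 * (if u = a then (1:ℝ) else 0) + a2 * (if u = b then (1:ℝ) else 0)) * M u v)) :=
      fun v => by ring
    rw [Finset.sum_congr rfl fun v _ => h v, Finset.sum_add_distrib, ← Finset.mul_sum,
      ← Finset.mul_sum, chi_sum, chi_sum]
  rw [Finset.sum_congr rfl fun u _ => inner u]
  have h2 : ∀ u : Fin n,
      b1 * ((a1 * (if u = a then (1:ℝ) else 0) + a2 * (if u = b then (1:ℝ) else 0)) * M u c)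
        + b2 * ((a1 * (if u = a then (1:ℝ) else 0) + a2 * (if u = b then (1:ℝ) else 0)) * M u d)
      = a1*b1*((if u = a then (1:ℝ) else 0) * M u c) + a2*b1*((if u = b then (1:ℝ) else 0) * M u c)
        + a1*b2*((if u = a then (1:ℝ) else 0) * M u d) + a2*b2*((if u = b then (1:ℝ) else 0) * M u d) :=
    fun u => by ring
  rw [Finset.sum_congr rfl fun u _ => h2 u]
  simp only [Finset.sum_add_distrib, ← Finset.mul_sum]
  rw [chi_sum, chi_sum, chi_sum, chi_sum]

lemma caseRot (p q : Fin n) (hpq : p ≠ q) (B : Matrix (Fin n) (Fin n) ℝ) (lam : Fin n → ℝ)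
    (hBs : ∀ u v, B u v = B v u)
    (hlpq : lam p = lam q)
    (hrowp : ∀ r, r ≠ p → r ≠ q → B p r = 0)
    (hrowq : ∀ r, r ≠ p → r ≠ q → B q r = 0)
    (hoff : ∀ r s, r ≠ p → r ≠ q → s ≠ p → s ≠ q → r ≠ s → B r s = 0) :
    ∃ P : Matrix (Fin n) (Fin n) ℝ, Pᵀ * P = 1 ∧
      (P * B * Pᵀ).IsDiag ∧ (P * Matrix.diagonal lam * Pᵀ).IsDiag := by
  classical
  set A : Matrix (Fin 2) (Fin 2) ℝ := !![B p p, B p q; B p q, B q q] with hA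
  have hAs : A.IsSymm := by
    rw [Matrix.IsSymm]
    ext i j
    fin_cases i <;> fin_cases j <;> simp [hA]
  obtain ⟨Q, d, hQQt, hQtQ, hQAQ⟩ := exists_orthog_diag A hAs
  -- entry facts
  have hc00 : Q 0 0 * Q 0 0 + Q 1 0 * Q 1 0 = 1 := by
    have := congrFun (congrFun hQtQ 0) 0
    simpa [Matrix.mul_apply, Fin.sum_univ_two, Matrix.one_apply] using this
  have hc01 : Q 0 0 * Q 0 1 + Q 1 0 * Q 1 1 = 0 := by
    have := congrFun (congrFun hQtQ 0) 1
    simpa [Matrix.mul_apply, Fin.sum_univ_two, Matrix.one_apply] using this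
  have hc11 : Q 0 1 * Q 0 1 + Q 1 1 * Q 1 1 = 1 := by
    have := congrFun (congrFun hQtQ 1) 1
    simpa [Matrix.mul_apply, Fin.sum_univ_two, Matrix.one_apply] using this
  have ho01 : Q 0 0 * Q 1 0 + Q 0 1 * Q 1 1 = 0 := by
    have := congrFun (congrFun hQQt 0) 1
    simpa [Matrix.mul_apply, Fin.sum_univ_two, Matrix.one_apply] using this
  have h01 : (Q 0 0 * B p p + Q 0 1 * B p q) * Q 1 0
      + (Q 0 0 * B p q + Q 0 1 * B q q) * Q 1 1 = 0 := by
    have := congrFun (congrFun hQAQ 0) 1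
    simpa [Matrix.mul_apply, Fin.sum_univ_two, hA, Matrix.diagonal_apply] using this
  have h10 : (Q 1 0 * B p p + Q 1 1 * B p q) * Q 0 0
      + (Q 1 0 * B p q + Q 1 1 * B q q) * Q 0 1 = 0 := by
    have := congrFun (congrFun hQAQ 1) 0
    simpa [Matrix.mul_apply, Fin.sum_univ_two, hA, Matrix.diagonal_apply] using this
  set P : Matrix (Fin n) (Fin n) ℝ := Matrix.of (fun x y =>
    if x = p then (if y = p then Q 0 0 else if y = q then Q 0 1 else 0)
    else if x = q then (if y = p then Q 1 0 else if y = q then Q 1 1 else 0)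
    else if y = x then 1 else 0) with hPdef
  have hPp : ∀ u, P p u = Q 0 0 * (if u = p then (1:ℝ) else 0) + Q 0 1 * (if u = q then (1:ℝ) else 0) := by
    intro u
    rw [hPdef]
    by_cases h1 : u = p
    · simp [h1, hpq, Ne.symm hpq]
    · by_cases h2 : u = q <;> simp [h1, h2, Ne.symm hpq]
  have hPq : ∀ u, P q u = Q 1 0 * (if u = p then (1:ℝ) else 0) + Q 1 1 * (if u = q then (1:ℝ) else 0) := by
    intro u
    rw [hPdef]
    by_cases h1 : u = p
    · simp [h1, hpq, Ne.symm hpq]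
    · by_cases h2 : u = q <;> simp [h1, h2, Ne.symm hpq]
  have hPo : ∀ x u, x ≠ p → x ≠ q → P x u
      = 1 * (if u = x then (1:ℝ) else 0) + 0 * (if u = q then (1:ℝ) else 0) := by
    intro x u hxp hxq
    rw [hPdef]
    simp [hxp, hxq]
  -- orthogonality of P
  have hsplit : ∀ f : Fin n → ℝ, ∑ u : Fin n, f u
      = f p + (f q + ∑ u ∈ (Finset.univ.erase p).erase q, f u) := by
    intro f
    rw [← Finset.add_sum_erase _ f (Finset.mem_univ p)]
    congr 1
    rw [← Finset.add_sum_erase _ f (Finset.mem_erase.mpr ⟨Ne.symm hpq, Finset.mem_univ q⟩)]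
  have hPtP : Pᵀ * P = 1 := by
    ext x y
    rw [Matrix.mul_apply]
    simp only [Matrix.transpose_apply]
    rw [hsplit (fun u => P u x * P u y)]
    have hrest : ∑ u ∈ (Finset.univ.erase p).erase q, P u x * P u y
        = if x = y ∧ x ≠ p ∧ x ≠ q then 1 else 0 := by
      have hterm : ∀ u ∈ (Finset.univ.erase p).erase q, P u x * P u y
          = (if x = u then (1:ℝ) else 0) * (if y = u then (1:ℝ) else 0) := by
        intro u hu
        obtain ⟨huq, hup, _⟩ : u ≠ q ∧ u ≠ p ∧ True := by
          simp only [Finset.mem_erase, Finset.mem_univ] at hu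
          exact ⟨hu.1, hu.2.1, trivial⟩
        rw [hPo u x hup huq, hPo u y hup huq]
        simp [eq_comm]
      rw [Finset.sum_congr rfl hterm]
      by_cases hxy : x = y
      · subst hxy
        by_cases hxp : x = p
        · rw [Finset.sum_eq_zero]
          · simp [hxp, hpq]
          · intro u hu
            simp only [Finset.mem_erase, Finset.mem_univ] at hu
            have : x ≠ u := by rw [hxp]; exact Ne.symm hu.2.1
            simp [this]
        · by_cases hxq : x = q
          · rw [Finset.sum_eq_zero]
            · simp [hxq, hxp]
            · intro u hu
              simp only [Finset.mem_erase, Finset.mem_univ] at hu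
              have : x ≠ u := by rw [hxq]; exact Ne.symm hu.1
              simp [this]
          · rw [Finset.sum_eq_single x]
            · simp [hxp, hxq]
            · intro u _ hux
              simp [Ne.symm hux]
            · intro hx
              exfalso
              apply hx
              simp [Finset.mem_erase, hxp, hxq]
      · rw [Finset.sum_eq_zero]
        · simp [hxy]
        · intro u _
          by_cases hxu : x = u
          · have : ¬ y = u := fun h => hxy (hxu.trans h.symm)
            simp [this]
          · simp [hxu]
    rw [hrest]
    rw [hPp x, hPp y, hPq x, hPq y]
    rw [Matrix.one_apply]
    by_cases hxy : x = y
    · subst hxy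
      by_cases hxp : x = p
      · simp only [hxp, if_pos rfl, if_neg hpq, hpq]
        simp [hpq]
        nlinarith [hc00]
      · by_cases hxq : x = q
        · simp only [hxq, if_pos rfl, if_neg (Ne.symm hpq)]
          simp [Ne.symm hpq, hxp]
          nlinarith [hc11]
        · simp [hxp, hxq]
    · rw [if_neg hxy]
      by_cases hxp : x = p
      · have hyq : y ≠ p := fun h => hxy (hxp.trans h.symm)
        by_cases hyq2 : y = q
        · simp only [hxp, hyq2, if_pos rfl, if_neg hpq, if_neg (Ne.symm hpq)]
          have : ¬ (q = q ∧ q ≠ p ∧ q ≠ q) := by simp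
          simp [hpq, Ne.symm hpq]
          nlinarith [hc01]
        · simp [hxp, hyq, hyq2, hpq]
      · by_cases hxq : x = q
        · have hyp : y ≠ q := fun h => hxy (hxq.trans h.symm)
          by_cases hyp2 : y = p
          · simp only [hxq, hyp2, if_pos rfl, if_neg hpq, if_neg (Ne.symm hpq)]
            simp [hpq, Ne.symm hpq]
            nlinarith [hc01]
          · simp [hxq, hyp, hyp2, Ne.symm hpq]
        · by_cases hyp : y = p
          · simp [hxp, hxq, hyp, hxy]
          · by_cases hyq : y = q
            · simp [hxp, hxq, hyq, hxy]
            · simp [hxp, hxq, hyp, hyq, hxy]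
  refine ⟨P, hPtP, ?_, ?_⟩
  · -- P B Pᵀ diagonal
    intro x y hxy
    rw [conj_expand]
    by_cases hxp : x = p
    · by_cases hyq : y = q
      · rw [hxp, hyq]
        rw [Finset.sum_congr rfl fun u _ => Finset.sum_congr rfl fun v _ => by
          rw [hPp u, hPq v]]
        rw [quad_chi, hBs q p]
        linear_combination h01
      · by_cases hyp : y = p
        · exact absurd (hxp.trans hyp.symm) hxy
        · rw [hxp]
          rw [Finset.sum_congr rfl fun u _ => Finset.sum_congr rfl fun v _ => by
            rw [hPp u, hPo y v hyp hyq]]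
          rw [quad_chi, hrowp y hyp hyq, hrowq y hyp hyq]
          ring
    · by_cases hxq : x = q
      · by_cases hyp : y = p
        · rw [hxq, hyp]
          rw [Finset.sum_congr rfl fun u _ => Finset.sum_congr rfl fun v _ => by
            rw [hPq u, hPp v]]
          rw [quad_chi, hBs q p]
          linear_combination h10
        · by_cases hyq : y = q
          · exact absurd (hxq.trans hyq.symm) hxy
          · rw [hxq]
            rw [Finset.sum_congr rfl fun u _ => Finset.sum_congr rfl fun v _ => by
              rw [hPq u, hPo y v hyp hyq]]
            rw [quad_chi, hrowp y hyp hyq, hrowq y hyp hyq]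
            ring
      · by_cases hyp : y = p
        · rw [hyp]
          rw [Finset.sum_congr rfl fun u _ => Finset.sum_congr rfl fun v _ => by
            rw [hPo x u hxp hxq, hPp v]]
          rw [quad_chi, hBs x p, hBs x q, hrowp x hxp hxq, hrowq x hxp hxq]
          ring
        · by_cases hyq : y = q
          · rw [hyq]
            rw [Finset.sum_congr rfl fun u _ => Finset.sum_congr rfl fun v _ => by
              rw [hPo x u hxp hxq, hPq v]]
            rw [quad_chi, hBs x p, hBs x q, hrowp x hxp hxq, hrowq x hxp hxq]
            ring
          · rw [Finset.sum_congr rfl fun u _ => Finset.sum_congr rfl fun v _ => by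
              rw [hPo x u hxp hxq, hPo y v hyp hyq]]
            rw [quad_chi, hoff x y hxp hxq hyp hyq hxy]
            ring
  · -- P D Pᵀ diagonal
    intro x y hxy
    rw [conj_expand]
    have hD : ∀ a b : Fin n, a ≠ b → Matrix.diagonal lam a b = 0 :=
      fun a b h => Matrix.diagonal_apply_ne _ h
    by_cases hxp : x = p
    · by_cases hyq : y = q
      · rw [hxp, hyq]
        rw [Finset.sum_congr rfl fun u _ => Finset.sum_congr rfl fun v _ => by
          rw [hPp u, hPq v]]
        rw [quad_chi, hD p q hpq, hD q p (Ne.symm hpq)]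
        simp only [Matrix.diagonal_apply_eq]
        rw [hlpq]
        linear_combination (lam q) * ho01
      · by_cases hyp : y = p
        · exact absurd (hxp.trans hyp.symm) hxy
        · rw [hxp]
          rw [Finset.sum_congr rfl fun u _ => Finset.sum_congr rfl fun v _ => by
            rw [hPp u, hPo y v hyp hyq]]
          rw [quad_chi, hD p y (Ne.symm hyp), hD q y (Ne.symm hyq)]
          ring
    · by_cases hxq : x = q
      · by_cases hyp : y = p
        · rw [hxq, hyp]
          rw [Finset.sum_congr rfl fun u _ => Finset.sum_congr rfl fun v _ => by
            rw [hPq u, hPp v]]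
          rw [quad_chi, hD p q hpq, hD q p (Ne.symm hpq)]
          simp only [Matrix.diagonal_apply_eq]
          rw [hlpq]
          linear_combination (lam q) * ho01
        · by_cases hyq : y = q
          · exact absurd (hxq.trans hyq.symm) hxy
          · rw [hxq]
            rw [Finset.sum_congr rfl fun u _ => Finset.sum_congr rfl fun v _ => by
              rw [hPq u, hPo y v hyp hyq]]
            rw [quad_chi, hD p y (Ne.symm hyp), hD q y (Ne.symm hyq)]
            ring
      · by_cases hyp : y = p
        · rw [hyp]
          rw [Finset.sum_congr rfl fun u _ => Finset.sum_congr rfl fun v _ => by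
            rw [hPo x u hxp hxq, hPp v]]
          rw [quad_chi, hD x p hxp, hD x q hxq]
          ring
        · by_cases hyq : y = q
          · rw [hyq]
            rw [Finset.sum_congr rfl fun u _ => Finset.sum_congr rfl fun v _ => by
              rw [hPo x u hxp hxq, hPq v]]
            rw [quad_chi, hD x p hxp, hD x q hxq]
            ring
          · rw [Finset.sum_congr rfl fun u _ => Finset.sum_congr rfl fun v _ => by
              rw [hPo x u hxp hxq, hPo y v hyp hyq]]
            rw [quad_chi, hD x y hxy]
            ring


end Rot

section Conds


variable {n : ℕ} {B : Matrix (Fin n) (Fin n) ℝ} {lam : Fin n → ℝ}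

lemma diagsum0 (lam : Fin n → ℝ) {j l : Fin n} (hjl : j ≠ l) :
    ∑ m : Fin n, Matrix.diagonal lam j m * Matrix.diagonal lam m l = 0 :=
  Finset.sum_eq_zero fun m _ => by
    rcases eq_or_ne m j with h | h
    · subst h; rw [Matrix.diagonal_apply_ne _ hjl, mul_zero]
    · rw [Matrix.diagonal_apply_ne _ (Ne.symm h), zero_mul]

lemma diagsum1 (lam : Fin n → ℝ) (j : Fin n) :
    ∑ m : Fin n, Matrix.diagonal lam j m * Matrix.diagonal lam m j = (lam j)^2 := by
  rw [Finset.sum_eq_single j (fun m _ hm => by rw [Matrix.diagonal_apply_ne _ (Ne.symm hm), zero_mul]) (by simp)]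
  simp [sq]

lemma cond1_of (hS : ∀ i j k l, mobiusS n B i j k l = mobiusS n (Matrix.diagonal lam) i j k l)
    {i j k l : Fin n} (hik : i ≠ k) (hil : i ≠ l) (hjk : j ≠ k) (hjl : j ≠ l) :
    B i k * B j l = B i l * B j k := by
  have h := hS i j k l
  simp only [mobiusS, if_neg hik, if_neg hil, if_neg hjk, if_neg hjl, zero_mul, add_zero,
    sub_zero, zero_add, zero_sub, neg_zero, Finset.sum_const_zero, mul_zero,
    Matrix.diagonal_apply_ne _ hik, Matrix.diagonal_apply_ne _ hil,
    Matrix.diagonal_apply_ne _ hjk, Matrix.diagonal_apply_ne _ hjl] at h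
  linarith

lemma cond2_of (hS : ∀ i j k l, mobiusS n B i j k l = mobiusS n (Matrix.diagonal lam) i j k l)
    {i j l : Fin n} (hij : i ≠ j) (hil : i ≠ l) (hjl : j ≠ l) :
    B i i * B j l - B i l * B j i + (1 / ((n : ℝ) - 2)) * ∑ m : Fin n, B j m * B m l = 0 := by
  have h := hS i j i l
  simp only [mobiusS, if_pos rfl, eq_self_iff_true, if_true, if_neg hjl, if_neg hil, if_neg (Ne.symm hij), one_mul,
    zero_mul, add_zero, sub_zero, Matrix.diagonal_apply_ne _ hjl, Matrix.diagonal_apply_ne _ hil,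
    Matrix.diagonal_apply_ne _ (Ne.symm hij), mul_zero, zero_sub, neg_zero] at h
  rw [diagsum0 lam hjl] at h
  simpa using h

lemma cond3_of (hS : ∀ i j k l, mobiusS n B i j k l = mobiusS n (Matrix.diagonal lam) i j k l)
    {i j : Fin n} (hij : i ≠ j) :
    B i i * B j j - B i j * B j i
      + (1 / ((n : ℝ) - 2)) * ((∑ m : Fin n, B j m * B m j) + (∑ m : Fin n, B i m * B m i))
      = lam i * lam j + (1 / ((n : ℝ) - 2)) * ((lam j)^2 + (lam i)^2) := by
  have h := hS i j i j
  simp only [mobiusS, if_pos rfl, eq_self_iff_true, if_true, if_neg hij, if_neg (Ne.symm hij), one_mul, zero_mul,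
    add_zero, sub_zero, zero_sub, neg_zero, mul_zero,
    Matrix.diagonal_apply_ne _ hij, Matrix.diagonal_apply_ne _ (Ne.symm hij)] at h
  rw [Finset.sum_add_distrib] at h
  rw [Finset.sum_add_distrib, diagsum1 lam j, diagsum1 lam i] at h
  simpa [Matrix.diagonal_apply_eq] using h


end Conds

section Helpers
variable {n : ℕ}

lemma exists_avoid3 (hn : 4 ≤ n) (p q r : Fin n) : ∃ t : Fin n, t ≠ p ∧ t ≠ q ∧ t ≠ r := by
  by_contra h
  push_neg at h
  have hsub : (Finset.univ : Finset (Fin n)) ⊆ {p, q, r} := by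
    intro t _
    rcases eq_or_ne t p with h1 | h1
    · simp [h1]
    · rcases eq_or_ne t q with h2 | h2
      · simp [h2]
      · simp [h t h1 h2]
  have h1 : (Finset.univ : Finset (Fin n)).card ≤ ({p, q, r} : Finset (Fin n)).card :=
    Finset.card_le_card hsub
  have h2 : ({p, q, r} : Finset (Fin n)).card ≤ 3 := by
    apply le_trans (Finset.card_insert_le _ _)
    have := Finset.card_insert_le q ({r} : Finset (Fin n))
    simp at this ⊢
    omega
  rw [Finset.card_univ, Fintype.card_fin] at h1
  omega

lemma exists_avoid2_pair (hn : 4 ≤ n) (p q : Fin n) :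
    ∃ r s : Fin n, r ≠ s ∧ r ≠ p ∧ r ≠ q ∧ s ≠ p ∧ s ≠ q := by
  obtain ⟨r, hrp, hrq, _⟩ := exists_avoid3 hn p q p
  obtain ⟨s, hsp, hsq, hsr⟩ := exists_avoid3 hn p q r
  exact ⟨r, s, Ne.symm hsr, hrp, hrq, hsp, hsq⟩

lemma clear_div {c a S : ℝ} (hc : c ≠ 0) (h : a + (1/c) * S = 0) : c * a + S = 0 := by
  have h2 := congrArg (fun x => c * x) h
  simp only [mul_zero] at h2
  calc c * a + S = c * (a + (1/c) * S) := by
        rw [mul_add, ← mul_assoc, mul_one_div_cancel hc, one_mul]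
    _ = 0 := h2

lemma clear_div2 {c a S b S' : ℝ} (hc : c ≠ 0) (h : a + (1/c) * S = b + (1/c) * S') :
    c * a + S = c * b + S' := by
  have h2 := congrArg (fun x => c * x) h
  calc c * a + S = c * (a + (1/c) * S) := by
        rw [mul_add, ← mul_assoc, mul_one_div_cancel hc, one_mul]
    _ = c * (b + (1/c) * S') := h2
    _ = c * b + S' := by rw [mul_add, ← mul_assoc, mul_one_div_cancel hc, one_mul]

lemma transportS (O B Bb : Matrix (Fin n) (Fin n) ℝ) (hO : O * Oᵀ = 1) (hO' : Oᵀ * O = 1)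
    (hS : ∀ i j k l, mobiusS n B i j k l = mobiusS n Bb i j k l) :
    ∀ i j k l, mobiusS n (O * B * Oᵀ) i j k l = mobiusS n (O * Bb * Oᵀ) i j k l := by
  intro i j k l
  rw [← equivar O B hO hO' i j k l, ← equivar O Bb hO hO' i j k l]
  refine Finset.sum_congr rfl fun a _ => Finset.sum_congr rfl fun b _ =>
    Finset.sum_congr rfl fun c _ => Finset.sum_congr rfl fun d _ => ?_
  rw [hS a b c d]

lemma caseConst (B : Matrix (Fin n) (Fin n) ℝ) (hB : B.IsSymm) (lam : Fin n → ℝ) (c : ℝ)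
    (hconst : ∀ i, lam i = c) :
    ∃ P : Matrix (Fin n) (Fin n) ℝ, Pᵀ * P = 1 ∧
      (P * B * Pᵀ).IsDiag ∧ (P * Matrix.diagonal lam * Pᵀ).IsDiag := by
  obtain ⟨Q, d, hQQt, hQtQ, hQBQ⟩ := exists_orthog_diag B hB
  refine ⟨Q, hQtQ, ?_, ?_⟩
  · rw [hQBQ]
    exact Matrix.isDiag_diagonal d
  · have hdl : Matrix.diagonal lam = (c : ℝ) • (1 : Matrix (Fin n) (Fin n) ℝ) := by
      ext i j
      rcases eq_or_ne i j with h | h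
      · subst h; simp [Matrix.diagonal_apply_eq, hconst i, Matrix.one_apply]
      · simp [Matrix.diagonal_apply_ne _ h, Matrix.one_apply_ne h]
    rw [hdl]
    have : Q * (c • (1 : Matrix (Fin n) (Fin n) ℝ)) * Qᵀ = c • (1 : Matrix (Fin n) (Fin n) ℝ) := by
      rw [Matrix.mul_smul, Matrix.mul_one, Matrix.smul_mul, hQQt]
    rw [this]
    intro i j hij
    simp [Matrix.one_apply_ne hij]
end Helpers

section CaseII
variable {n : ℕ}

lemma caseII (hn : 4 ≤ n) (B : Matrix (Fin n) (Fin n) ℝ) (lam : Fin n → ℝ)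
    (hBs : ∀ u v, B u v = B v u)
    (hS : ∀ i j k l, mobiusS n B i j k l = mobiusS n (Matrix.diagonal lam) i j k l)
    (p q r₀ : Fin n) (hpq : p ≠ q) (hr0p : r₀ ≠ p) (hr0q : r₀ ≠ q)
    (hG : B p q ≠ 0) (hv0 : B p r₀ ≠ 0)
    (hnc : ∃ a b : Fin n, lam a ≠ lam b) :
    (∃ P : Matrix (Fin n) (Fin n) ℝ, Pᵀ * P = 1 ∧
      ∃ l1 l2 μ' μb' : ℝ, l1 ≠ l2 ∧ (μ' = μb' ∨ μ' = -μb') ∧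
      (∀ i j : Fin n, (P * Matrix.diagonal lam * Pᵀ) i j =
        if i = j then (if (i : ℕ) = 0 then l1 else if (i : ℕ) = 1 then l2 else μb') else 0) ∧
      (∀ i j : Fin n, 2 ≤ (i : ℕ) ∨ 2 ≤ (j : ℕ) →
        (P * B * Pᵀ) i j = if i = j then μ' else 0)) := by
  have hn4 : (4:ℝ) ≤ (n:ℝ) := by exact_mod_cast hn
  have hne : ((n:ℝ) - 2) ≠ 0 := by linarith
  have C2' : ∀ i j l : Fin n, i ≠ j → i ≠ l → j ≠ l →
      ((n:ℝ)-2) * (B i i * B j l - B i l * B j i) + ∑ m : Fin n, B j m * B m l = 0 :=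
    fun i j l h1 h2 h3 => clear_div hne (cond2_of hS h1 h2 h3)
  have C3' : ∀ i j : Fin n, i ≠ j →
      ((n:ℝ)-2) * (B i i * B j j - B i j * B j i)
        + ((∑ m : Fin n, B j m * B m j) + (∑ m : Fin n, B i m * B m i))
      = ((n:ℝ)-2) * (lam i * lam j) + ((lam j)^2 + (lam i)^2) :=
    fun i j h => clear_div2 hne (cond3_of hS h)
  -- step 1 : B q r₀ ≠ 0
  have hw0 : B q r₀ ≠ 0 := by
    intro hw0
    have hwall : ∀ r, r ≠ p → r ≠ q → B q r = 0 := by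
      intro r hrp hrq
      rcases eq_or_ne r r₀ with h | h
      · rw [h]; exact hw0
      · have h1 := cond1_of hS (i:=p) (j:=q) (k:=r) (l:=r₀)
          (Ne.symm hrp) (Ne.symm hr0p) (Ne.symm hrq) (Ne.symm hr0q)
        rw [hw0, mul_zero] at h1
        rcases mul_eq_zero.mp h1.symm with h2 | h2
        · exact absurd h2 hv0
        · exact h2
    have hsum : ∑ m : Fin n, B q m * B m r₀ = B q p * B p r₀ := by
      rw [Finset.sum_eq_single p]
      · intro m _ hmp
        rcases eq_or_ne m q with h | h
        · rw [h, hw0, mul_zero]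
        · rcases eq_or_ne m r₀ with h' | h'
          · rw [h', hw0, zero_mul]
          · rw [hwall m hmp h, zero_mul]
      · intro h; exact absurd (Finset.mem_univ p) h
    have h2 := C2' p q r₀ hpq (Ne.symm hr0p) (Ne.symm hr0q)
    rw [hsum, hw0, hBs q p] at h2
    have h3 : B p r₀ * B p q * (((n:ℝ)-2) - 1) = 0 := by linear_combination -h2
    rcases mul_eq_zero.mp h3 with h4 | h4
    · rcases mul_eq_zero.mp h4 with h5 | h5
      · exact hv0 h5
      · exact hG h5
    · linarith
  set κ := B q r₀ / B p r₀ with hκdef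
  have hκv : κ * B p r₀ = B q r₀ := by rw [hκdef]; field_simp
  have hκ : κ ≠ 0 := by
    intro h
    rw [h, zero_mul] at hκv
    exact hw0 hκv.symm
  have hw : ∀ r, r ≠ p → r ≠ q → B q r = κ * B p r := by
    intro r hrp hrq
    rcases eq_or_ne r r₀ with h | h
    · rw [h, ← hκv]
    · have h1 := cond1_of hS (i:=p) (j:=q) (k:=r) (l:=r₀)
        (Ne.symm hrp) (Ne.symm hr0p) (Ne.symm hrq) (Ne.symm hr0q)
      rw [← hκv] at h1
      have h2 : B p r₀ * (κ * B p r) = B p r₀ * B q r := by linear_combination h1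
      exact (mul_left_cancel₀ hv0 h2).symm
  have hCc : ∀ r s', r ≠ p → r ≠ q → s' ≠ p → s' ≠ q → r ≠ s' →
      B r s' * B p q = κ * B p r * B p s' := by
    intro r s' hrp hrq hsp hsq hrs
    have h1 := cond1_of hS (i:=p) (j:=r) (k:=q) (l:=s') hpq (Ne.symm hsp) hrq hrs
    rw [hBs r q, hw r hrp hrq] at h1
    linear_combination h1
  set Spq := ∑ m : Fin n, B p m * B m q with hSpq
  set μ := -Spq / (((n:ℝ)-2) * B p q) with hμdef
  have hμc : μ * (((n:ℝ)-2) * B p q) = -Spq := by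
    rw [hμdef]; field_simp
  have hdiagc : ∀ t, t ≠ p → t ≠ q → B t t * B p q = μ * B p q + κ * (B p t)^2 := by
    intro t htp htq
    have h1 := C2' t p q htp htq hpq
    rw [hBs t q, hw t htp htq] at h1
    have h2 : ((n:ℝ)-2) * (B t t * B p q) = ((n:ℝ)-2) * (μ * B p q + κ * (B p t)^2) := by
      linear_combination h1 - hμc
    exact mul_left_cancel₀ hne h2
  obtain ⟨t₀, ht₀p, ht₀q, ht₀r⟩ := exists_avoid3 hn p q r₀
  have hqqc : B q q = μ + κ * B p q := by
    have h1 := C2' q p r₀ (Ne.symm hpq) (Ne.symm hr0q) (Ne.symm hr0p)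
    rw [← hκv] at h1
    have h2 := C2' t₀ p r₀ ht₀p ht₀r (Ne.symm hr0p)
    have hd := hdiagc t₀ ht₀p ht₀q
    have hc := hCc t₀ r₀ ht₀p ht₀q hr0p hr0q ht₀r
    have h3 : ((n:ℝ)-2) * (B p r₀ * (B p q * (B q q - (μ + κ * B p q)))) = 0 := by
      linear_combination (B p q) * h1 - (B p q) * h2 + ((n:ℝ)-2) * (B p r₀) * hd
        - ((n:ℝ)-2) * (B p t₀) * hc
    rcases mul_eq_zero.mp h3 with h | h
    · exact absurd h hne
    · rcases mul_eq_zero.mp h with h' | h'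
      · exact absurd h' hv0
      · rcases mul_eq_zero.mp h' with h'' | h''
        · exact absurd h'' hG
        · linarith [sub_eq_zero.mp h'']
  have hppc : κ * B p p = κ * μ + B p q := by
    have h1 := C2' p q r₀ hpq (Ne.symm hr0p) (Ne.symm hr0q)
    rw [← hκv, hBs q p] at h1
    have h2 := C2' t₀ q r₀ ht₀q ht₀r (Ne.symm hr0q)
    rw [← hκv, hw t₀ ht₀p ht₀q] at h2
    have hd := hdiagc t₀ ht₀p ht₀q
    have hc := hCc t₀ r₀ ht₀p ht₀q hr0p hr0q ht₀r
    have h3 : ((n:ℝ)-2) * (B p r₀ * (B p q * (κ * B p p - (κ * μ + B p q)))) = 0 := by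
      linear_combination (B p q) * h1 - (B p q) * h2 + ((n:ℝ)-2) * κ * (B p r₀) * hd
        - ((n:ℝ)-2) * κ * (B p t₀) * hc
    rcases mul_eq_zero.mp h3 with h | h
    · exact absurd h hne
    · rcases mul_eq_zero.mp h with h' | h'
      · exact absurd h' hv0
      · rcases mul_eq_zero.mp h' with h'' | h''
        · exact absurd h'' hG
        · linarith [sub_eq_zero.mp h'']
  set ρ := κ / B p q with hρdef
  have hρG : ρ * B p q = κ := by rw [hρdef]; field_simp
  have hρ0 : ρ ≠ 0 := by
    intro h
    rw [h, zero_mul] at hρG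
    exact hκ hρG.symm
  set y : Fin n → ℝ := fun u => if u = p then B p q / κ else if u = q then B p q else B p u
    with hydef
  have hyp : y p = B p q / κ := by simp [hydef]
  have hyq : y q = B p q := by simp [hydef, Ne.symm hpq]
  have hyr : ∀ r, r ≠ p → r ≠ q → y r = B p r := by
    intro r h1 h2; simp [hydef, h1, h2]
  have hypn : y p ≠ 0 := by rw [hyp]; exact div_ne_zero hG hκ
  have hyqn : y q ≠ 0 := by rw [hyq]; exact hG
  have hρyp : ρ * y p = 1 := by rw [hρdef, hyp]; field_simp
  have hypc : κ * y p = B p q := by rw [hyp]; field_simp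
  have hBform : ∀ u v', B u v' = (if u = v' then μ else 0) + ρ * y u * y v' := by
    intro u v'
    rcases eq_or_ne u p with hup | hup
    · rcases eq_or_ne v' p with hvp | hvp
      · rw [hup, hvp, if_pos rfl]
        have hx : κ * (B p p - (μ + ρ * y p * y p)) = 0 := by
          linear_combination hppc - (ρ * y p) * hypc - (B p q) * hρyp
        rcases mul_eq_zero.mp hx with h | h
        · exact absurd h hκ
        · linarith [sub_eq_zero.mp h]
      · rcases eq_or_ne v' q with hvq | hvq
        · rw [hup, hvq, if_neg hpq, hyq]
          linear_combination (-(B p q)) * hρyp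
        · rw [hup, if_neg (fun h => hvp h.symm), hyr v' hvp hvq]
          linear_combination (-(B p v')) * hρyp
    · rcases eq_or_ne u q with huq | huq
      · rcases eq_or_ne v' p with hvp | hvp
        · rw [huq, hvp, if_neg (Ne.symm hpq), hBs q p, hyq]
          linear_combination (-(B p q)) * hρyp
        · rcases eq_or_ne v' q with hvq | hvq
          · rw [huq, hvq, if_pos rfl, hyq]
            linear_combination hqqc - (B p q) * hρG
          · rw [huq, if_neg (fun h => hvq h.symm), hyq, hyr v' hvp hvq, hw v' hvp hvq]
            linear_combination (-(B p v')) * hρG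
      · rcases eq_or_ne v' p with hvp | hvp
        · rw [hvp, if_neg hup, hBs u p, hyr u hup huq]
          linear_combination (-(B p u)) * hρyp
        · rcases eq_or_ne v' q with hvq | hvq
          · rw [hvq, if_neg huq, hBs u q, hw u hup huq, hyq, hyr u hup huq]
            linear_combination (-(B p u)) * hρG
          · rcases eq_or_ne u v' with huv | huv
            · rw [← huv, if_pos rfl, hyr u hup huq]
              have hd := hdiagc u hup huq
              have hx : B p q * (B u u - ((μ : ℝ) + ρ * B p u * B p u)) = 0 := by
                linear_combination hd - ((B p u)^2) * hρG
              rcases mul_eq_zero.mp hx with h | h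
              · exact absurd h hG
              · linarith [sub_eq_zero.mp h]
            · rw [if_neg huv, hyr u hup huq, hyr v' hvp hvq]
              have hcx := hCc u v' hup huq hvp hvq huv
              have hx : B p q * (B u v' - ((0:ℝ) + ρ * B p u * B p v')) = 0 := by
                linear_combination hcx - (B p u * B p v') * hρG
              rcases mul_eq_zero.mp hx with h | h
              · exact absurd h hG
              · linarith [sub_eq_zero.mp h]
  set T := ∑ u : Fin n, (y u)^2 with hT0
  have hB2 : ∀ i j, ∑ m : Fin n, B i m * B m j
      = (if i = j then μ^2 else 0) + 2*μ*ρ*(y i)*(y j) + ρ^2*(y i)*(y j)*T := by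
    intro i j
    have hterm : ∀ m, B i m * B m j
        = ((if i = m then μ else 0) * (if m = j then μ else 0))
          + ρ * y m * y j * (if i = m then μ else 0)
          + ρ * y i * y m * (if m = j then μ else 0)
          + ρ^2 * (y i) * (y j) * (y m)^2 := by
      intro m; rw [hBform i m, hBform m j]; ring
    rw [Finset.sum_congr rfl fun m _ => hterm m]
    simp only [Finset.sum_add_distrib]
    have s1 : ∑ m : Fin n, (if i = m then μ else 0) * (if m = j then μ else 0)
        = (if i = j then μ^2 else 0) := by
      rw [Finset.sum_eq_single i (fun m _ hmi => by simp [(Ne.symm hmi : i ≠ m)]) (by simp)]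
      by_cases h : i = j <;> simp [h, sq]
    have s2 : ∑ m : Fin n, ρ * y m * y j * (if i = m then μ else 0) = μ*ρ*(y i)*(y j) := by
      rw [Finset.sum_eq_single i (fun m _ hmi => by simp [(Ne.symm hmi : i ≠ m)]) (by simp)]
      rw [if_pos rfl]; ring
    have s3 : ∑ m : Fin n, ρ * y i * y m * (if m = j then μ else 0) = μ*ρ*(y i)*(y j) := by
      rw [Finset.sum_eq_single j (fun m _ hmj => by simp [hmj]) (by simp)]
      rw [if_pos rfl]; ring
    have s4 : ∑ m : Fin n, ρ^2 * (y i) * (y j) * (y m)^2 = ρ^2*(y i)*(y j)*T := by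
      rw [hT0, ← Finset.mul_sum]
    rw [s1, s2, s3, s4]
    ring
  have hTeq : ρ * T = -(n:ℝ) * μ := by
    have h := C2' r₀ p q hr0p hr0q hpq
    rw [hB2 p q, if_neg hpq] at h
    rw [hBform r₀ r₀, if_pos rfl, hBform r₀ q, if_neg hr0q, hBform p r₀, if_neg (Ne.symm hr0p),
      hBform p q, if_neg hpq] at h
    have h2 : y p * (y q * (ρ * (((n:ℝ)-2)*μ + 2*μ + ρ*T))) = 0 := by linear_combination h
    rcases mul_eq_zero.mp h2 with h | h
    · exact absurd h hypn
    · rcases mul_eq_zero.mp h with h' | h'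
      · exact absurd h' hyqn
      · rcases mul_eq_zero.mp h' with h'' | h''
        · exact absurd h'' hρ0
        · linear_combination h''
  have hlam : ∀ i j, i ≠ j →
      ((n:ℝ)-2)*(lam i * lam j) + ((lam j)^2 + (lam i)^2) = (n:ℝ)*μ^2 := by
    intro i j hij
    have h := C3' i j hij
    rw [hB2 j j, if_pos rfl, hB2 i i, if_pos rfl, hBform i i, if_pos rfl,
      hBform j j, if_pos rfl, hBform i j, if_neg hij, hBform j i, if_neg (Ne.symm hij)] at h
    linear_combination (-1) * h + ρ*((y i)^2 + (y j)^2) * hTeq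
  obtain ⟨a, b, hab⟩ := hnc
  set μb := -(lam a + lam b)/((n:ℝ)-2) with hμbdef
  have hμbc : μb * ((n:ℝ)-2) = -(lam a + lam b) := by rw [hμbdef]; field_simp
  have hoth : ∀ i, i ≠ a → i ≠ b → lam i = μb := by
    intro i hia hib
    have h1 := hlam a i (Ne.symm hia)
    have h2 := hlam b i (Ne.symm hib)
    have h3 : (lam a - lam b) * (((n:ℝ)-2)*lam i + (lam a + lam b)) = 0 := by
      linear_combination h1 - h2
    rcases mul_eq_zero.mp h3 with h | h
    · exact absurd (sub_eq_zero.mp h) hab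
    · have h4 : ((n:ℝ)-2) * lam i = ((n:ℝ)-2) * μb := by linear_combination h - hμbc
      exact mul_left_cancel₀ hne h4
  obtain ⟨i₀, j₀, hij₀, hi₀a, hi₀b, hj₀a, hj₀b⟩ := exists_avoid2_pair hn a b
  have hμμ : (n:ℝ)*μb^2 = (n:ℝ)*μ^2 := by
    have h := hlam i₀ j₀ hij₀
    rw [hoth i₀ hi₀a hi₀b, hoth j₀ hj₀a hj₀b] at h
    linear_combination h
  have hnR : (n:ℝ) ≠ 0 := by linarith
  have hμ2 : μb^2 = μ^2 := mul_left_cancel₀ hnR hμμ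
  have hpm : μ = μb ∨ μ = -μb := by
    have h : (μ - μb)*(μ + μb) = 0 := by linear_combination -hμ2
    rcases mul_eq_zero.mp h with h | h
    · left; linarith [sub_eq_zero.mp h]
    · right; linarith [h]
  have hspec : ∃ s, (∀ i, i ≠ s → lam i = μb) ∧ lam s ≠ μb := by
    by_cases hA : lam a = μb
    · refine ⟨b, ?_, ?_⟩
      · intro i hib
        rcases eq_or_ne i a with h | h
        · rw [h, hA]
        · exact hoth i h hib
      · intro h; exact hab (hA.trans h.symm)
    · have hBv : lam b = μb := by
        by_contra hB
        have hfa : lam a = -(((n:ℝ)-1))*μb := by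
          have h1 := hlam a i₀ (Ne.symm hi₀a)
          rw [hoth i₀ hi₀a hi₀b] at h1
          have h2 : (lam a - μb) * (lam a + ((n:ℝ)-1)*μb) = 0 := by
            linear_combination h1 - hμμ
          rcases mul_eq_zero.mp h2 with h | h
          · exact absurd (sub_eq_zero.mp h) hA
          · linarith [h]
        have hfb : lam b = -(((n:ℝ)-1))*μb := by
          have h1 := hlam b i₀ (Ne.symm hi₀b)
          rw [hoth i₀ hi₀a hi₀b] at h1
          have h2 : (lam b - μb) * (lam b + ((n:ℝ)-1)*μb) = 0 := by
            linear_combination h1 - hμμ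
          rcases mul_eq_zero.mp h2 with h | h
          · exact absurd (sub_eq_zero.mp h) hB
          · linarith [h]
        exact hab (hfa.trans hfb.symm)
      refine ⟨a, ?_, hA⟩
      intro i hia
      rcases eq_or_ne i b with h | h
      · rw [h, hBv]
      · exact hoth i hia h
  obtain ⟨s, hss, hsne⟩ := hspec
  by_cases hY : ∀ u, u ≠ s → y u = 0
  · obtain ⟨b', hb0, hyi⟩ := exists_basis_one hn s y hY
    exact assembleII_core hn B lam μ μb ρ y s hss hsne hpm hBform b' hb0 hyi
  · push_neg at hY
    obtain ⟨t, hts, hyt⟩ := hY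
    obtain ⟨b', hb0, hyi⟩ := exists_basis_two hn s y ⟨t, hts, hyt⟩
    exact assembleII_core hn B lam μ μb ρ y s hss hsne hpm hBform b' hb0 hyi

end CaseII

section KeyMain
variable {n : ℕ}

lemma keyDiag (hn : 4 ≤ n) (B : Matrix (Fin n) (Fin n) ℝ) (lam : Fin n → ℝ)
    (hB : B.IsSymm)
    (hS : ∀ i j k l, mobiusS n B i j k l = mobiusS n (Matrix.diagonal lam) i j k l) :
    (∃ P : Matrix (Fin n) (Fin n) ℝ, Pᵀ * P = 1 ∧
      (P * B * Pᵀ).IsDiag ∧ (P * Matrix.diagonal lam * Pᵀ).IsDiag) ∨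
    (∃ P : Matrix (Fin n) (Fin n) ℝ, Pᵀ * P = 1 ∧
      ∃ l1 l2 μ' μb' : ℝ, l1 ≠ l2 ∧ (μ' = μb' ∨ μ' = -μb') ∧
      (∀ i j : Fin n, (P * Matrix.diagonal lam * Pᵀ) i j =
        if i = j then (if (i : ℕ) = 0 then l1 else if (i : ℕ) = 1 then l2 else μb') else 0) ∧
      (∀ i j : Fin n, 2 ≤ (i : ℕ) ∨ 2 ≤ (j : ℕ) →
        (P * B * Pᵀ) i j = if i = j then μ' else 0)) := by
  have hBs : ∀ u v, B u v = B v u := fun u v => (congrFun (congrFun hB u) v).symm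
  have hn4 : (4:ℝ) ≤ (n:ℝ) := by exact_mod_cast hn
  have hne : ((n:ℝ) - 2) ≠ 0 := by linarith
  have C2' : ∀ i j l : Fin n, i ≠ j → i ≠ l → j ≠ l →
      ((n:ℝ)-2) * (B i i * B j l - B i l * B j i) + ∑ m : Fin n, B j m * B m l = 0 :=
    fun i j l h1 h2 h3 => clear_div hne (cond2_of hS h1 h2 h3)
  have C3' : ∀ i j : Fin n, i ≠ j →
      ((n:ℝ)-2) * (B i i * B j j - B i j * B j i)
        + ((∑ m : Fin n, B j m * B m j) + (∑ m : Fin n, B i m * B m i))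
      = ((n:ℝ)-2) * (lam i * lam j) + ((lam j)^2 + (lam i)^2) :=
    fun i j h => clear_div2 hne (cond3_of hS h)
  by_cases hconst : ∀ i, lam i = lam (⟨0, by omega⟩ : Fin n)
  · left
    exact caseConst B hB lam (lam (⟨0, by omega⟩ : Fin n)) hconst
  · push_neg at hconst
    obtain ⟨a₀, ha₀⟩ := hconst
    have hnc : ∃ a b : Fin n, lam a ≠ lam b := ⟨a₀, _, ha₀⟩
    by_cases hdiag : ∀ i j : Fin n, i ≠ j → B i j = 0
    · left
      refine ⟨1, by simp, ?_, ?_⟩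
      · have h1 : (1 : Matrix (Fin n) (Fin n) ℝ) * B * (1 : Matrix (Fin n) (Fin n) ℝ)ᵀ = B := by
          simp
        rw [h1]
        exact fun i j hij => hdiag i j hij
      · have h1 : (1 : Matrix (Fin n) (Fin n) ℝ) * Matrix.diagonal lam
            * (1 : Matrix (Fin n) (Fin n) ℝ)ᵀ = Matrix.diagonal lam := by simp
        rw [h1]
        exact Matrix.isDiag_diagonal lam
    · push_neg at hdiag
      obtain ⟨p, q, hpq, hBpq⟩ := hdiag
      by_cases hcase : ∀ r, r ≠ p → r ≠ q → B p r = 0 ∧ B q r = 0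
      · have hrowp : ∀ r, r ≠ p → r ≠ q → B p r = 0 := fun r h1 h2 => (hcase r h1 h2).1
        have hrowq : ∀ r, r ≠ p → r ≠ q → B q r = 0 := fun r h1 h2 => (hcase r h1 h2).2
        have hoff : ∀ r s', r ≠ p → r ≠ q → s' ≠ p → s' ≠ q → r ≠ s' → B r s' = 0 := by
          intro r s' h1 h2 h3 h4 h5
          have hc := cond1_of hS (i:=p) (j:=r) (k:=q) (l:=s') hpq (Ne.symm h3) h2 h5
          rw [hBs r q, hrowq r h1 h2, mul_zero] at hc
          rcases mul_eq_zero.mp hc with h | h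
          · exact absurd h hBpq
          · exact h
        by_cases hll : lam p = lam q
        · left
          exact caseRot p q hpq B lam hBs hll hrowp hrowq hoff
        · right
          set Spq := ∑ m : Fin n, B p m * B m q with hSpqdef
          set μ := -Spq / (((n:ℝ)-2) * B p q) with hμdef
          have hμc : μ * (((n:ℝ)-2) * B p q) = -Spq := by rw [hμdef]; field_simp
          have hdiagR : ∀ r, r ≠ p → r ≠ q → B r r = μ := by
            intro r h1 h2
            have hc := C2' r p q h1 h2 hpq
            rw [hBs r q, hrowq r h1 h2, hrowp r h1 h2] at hc
            have h3 : ((n:ℝ)-2) * (B r r * B p q) = ((n:ℝ)-2) * (μ * B p q) := by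
              linear_combination hc - hμc
            exact mul_right_cancel₀ hBpq (mul_left_cancel₀ hne h3)
          have hrowall : ∀ r m, r ≠ p → r ≠ q → m ≠ r → B r m = 0 := by
            intro r m h1 h2 h3
            rcases eq_or_ne m p with h | h
            · rw [h, hBs r p]; exact hrowp r h1 h2
            · rcases eq_or_ne m q with h' | h'
              · rw [h', hBs r q]; exact hrowq r h1 h2
              · exact hoff r m h1 h2 h h' (Ne.symm h3)
          have hsumR : ∀ r, r ≠ p → r ≠ q → (∑ m : Fin n, B r m * B m r) = μ^2 := by
            intro r h1 h2
            rw [Finset.sum_eq_single r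
              (fun m _ hm => by rw [hrowall r m h1 h2 hm, zero_mul]) (by simp)]
            rw [hdiagR r h1 h2]; ring
          obtain ⟨r₀, r₁, hr01, hr0p, hr0q, hr1p, hr1q⟩ := exists_avoid2_pair hn p q
          have hlamR : ∀ r r', r ≠ p → r ≠ q → r' ≠ p → r' ≠ q → lam r = lam r' := by
            intro r r' h1 h2 h3 h4
            rcases eq_or_ne r r' with h | h
            · rw [h]
            · have e1 := C3' r p h1
              rw [hBs r p, hrowp r h1 h2, hdiagR r h1 h2, hsumR r h1 h2] at e1
              have e2 := C3' r' p h3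
              rw [hBs r' p, hrowp r' h3 h4, hdiagR r' h3 h4, hsumR r' h3 h4] at e2
              have f1 : (lam r - lam r') * (((n:ℝ)-2) * lam p + (lam r + lam r')) = 0 := by
                linear_combination e2 - e1
              have e3 := C3' r q h2
              rw [hBs r q, hrowq r h1 h2, hdiagR r h1 h2, hsumR r h1 h2] at e3
              have e4 := C3' r' q h4
              rw [hBs r' q, hrowq r' h3 h4, hdiagR r' h3 h4, hsumR r' h3 h4] at e4
              have f2 : (lam r - lam r') * (((n:ℝ)-2) * lam q + (lam r + lam r')) = 0 := by
                linear_combination e4 - e3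
              rcases mul_eq_zero.mp f1 with h5 | h5
              · linarith [sub_eq_zero.mp h5]
              · rcases mul_eq_zero.mp f2 with h6 | h6
                · linarith [sub_eq_zero.mp h6]
                · exfalso
                  apply hll
                  have h7 : ((n:ℝ)-2) * lam p = ((n:ℝ)-2) * lam q := by linarith
                  exact mul_left_cancel₀ hne h7
          set μb := lam r₀ with hμbdef
          have hlamRall : ∀ r, r ≠ p → r ≠ q → lam r = μb :=
            fun r h1 h2 => hlamR r r₀ h1 h2 hr0p hr0q
          have hμ2 : μ^2 = μb^2 := by
            have e := C3' r₀ r₁ hr01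
            rw [hrowall r₀ r₁ hr0p hr0q (Ne.symm hr01), hrowall r₁ r₀ hr1p hr1q hr01,
              hdiagR r₀ hr0p hr0q, hdiagR r₁ hr1p hr1q, hsumR r₀ hr0p hr0q,
              hsumR r₁ hr1p hr1q, hlamRall r₀ hr0p hr0q, hlamRall r₁ hr1p hr1q] at e
            have hnR : (n:ℝ) ≠ 0 := by linarith
            have h8 : (n:ℝ)*μ^2 = (n:ℝ)*μb^2 := by linear_combination e
            exact mul_left_cancel₀ hnR h8
          have hpm : μ = μb ∨ μ = -μb := by
            have h : (μ - μb)*(μ + μb) = 0 := by linear_combination hμ2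
            rcases mul_eq_zero.mp h with h | h
            · left; linarith [sub_eq_zero.mp h]
            · right; linarith [h]
          exact assembleI hn B lam p q μ μb hpq hBs hrowp hrowq hoff hdiagR hlamRall hll hpm
      · push_neg at hcase
        obtain ⟨r₀, hr0p, hr0q, hor⟩ := hcase
        have hor' : B p r₀ ≠ 0 ∨ B q r₀ ≠ 0 := by tauto
        right
        rcases hor' with hv | hv
        · exact caseII hn B lam hBs hS p q r₀ hpq hr0p hr0q hBpq hv hnc
        · exact caseII hn B lam hBs hS q p r₀ (Ne.symm hpq) hr0q hr0p
            (by rw [hBs q p]; exact hBpq) hv hnc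

end KeyMain

/-- Theorem 6.1: if two symmetric bilinear forms `B`, `B̄` on an `n`-dimensional
(`n ≥ 4`) inner product space have equal associated tensors `S = S̄`, then either
they are simultaneously diagonalizable by an orthonormal basis, or in a suitable
orthonormal basis `B̄ = diag(λ̄₁, λ̄₂, μ̄, …, μ̄)` with `λ̄₁ ≠ λ̄₂`, while `B` is a
symmetric 2×2 block on the first two vectors and `μ·Id` elsewhere, `μ = ±μ̄`.
(A change of orthonormal basis is encoded by conjugation with `P`, `PᵀP = 1`.) -/
theorem stmt0 (n : ℕ) (hn : 4 ≤ n) (B Bb : Matrix (Fin n) (Fin n) ℝ)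
    (hB : B.IsSymm) (hBb : Bb.IsSymm)
    (hS : ∀ i j k l, mobiusS n B i j k l = mobiusS n Bb i j k l) :
    (∃ P : Matrix (Fin n) (Fin n) ℝ, Pᵀ * P = 1 ∧
      (P * B * Pᵀ).IsDiag ∧ (P * Bb * Pᵀ).IsDiag) ∨
    (∃ P : Matrix (Fin n) (Fin n) ℝ, Pᵀ * P = 1 ∧
      ∃ l1 l2 μ μb : ℝ, l1 ≠ l2 ∧ (μ = μb ∨ μ = -μb) ∧
      (∀ i j : Fin n, (P * Bb * Pᵀ) i j =
        if i = j then (if (i : ℕ) = 0 then l1 else if (i : ℕ) = 1 then l2 else μb) else 0) ∧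
      (∀ i j : Fin n, 2 ≤ (i : ℕ) ∨ 2 ≤ (j : ℕ) →
        (P * B * Pᵀ) i j = if i = j then μ else 0)) := by
  obtain ⟨Q, d, hQQt, hQtQ, hQD⟩ := exists_orthog_diag Bb hBb
  have hS1 : ∀ i j k l, mobiusS n (Q * B * Qᵀ) i j k l
      = mobiusS n (Q * Bb * Qᵀ) i j k l := transportS Q B Bb hQQt hQtQ hS
  rw [hQD] at hS1
  have hB1 : (Q * B * Qᵀ).IsSymm := by
    rw [Matrix.IsSymm, Matrix.transpose_mul, Matrix.transpose_mul,
      Matrix.transpose_transpose, hB, Matrix.mul_assoc]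
  have hkey := keyDiag hn (Q * B * Qᵀ) d hB1 hS1
  have hcompB : ∀ P : Matrix (Fin n) (Fin n) ℝ,
      (P * Q) * B * (P * Q)ᵀ = P * (Q * B * Qᵀ) * Pᵀ := by
    intro P
    rw [Matrix.transpose_mul]
    simp only [Matrix.mul_assoc]
  have hcompBb : ∀ P : Matrix (Fin n) (Fin n) ℝ,
      (P * Q) * Bb * (P * Q)ᵀ = P * Matrix.diagonal d * Pᵀ := by
    intro P
    rw [← hQD, Matrix.transpose_mul]
    simp only [Matrix.mul_assoc]
  have hortho : ∀ P : Matrix (Fin n) (Fin n) ℝ, Pᵀ * P = 1 → (P * Q)ᵀ * (P * Q) = 1 := by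
    intro P hP
    rw [Matrix.transpose_mul, Matrix.mul_assoc, ← Matrix.mul_assoc Pᵀ P Q, hP, Matrix.one_mul,
      hQtQ]
  rcases hkey with ⟨P, hP1, hP2, hP3⟩ | ⟨P, hP1, l1, l2, μ', μb', h1, h2, h3, h4⟩
  · left
    refine ⟨P * Q, hortho P hP1, ?_, ?_⟩
    · rw [hcompB P]; exact hP2
    · rw [hcompBb P]; exact hP3
  · right
    refine ⟨P * Q, hortho P hP1, l1, l2, μ', μb', h1, h2, ?_, ?_⟩
    · intro i j; rw [hcompBb P]; exact h3 i j
    · intro i j hij; rw [hcompB P]; exact h4 i j hij
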